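/- For n ≥ 1, let P_n and Q_n be the Legendre functions of the first and second kind. Then as L → 1⁺, (P_n Q_n)'(L) = 1/(2(1−L)) + O(|log(L−1)|); consequently the quantity λ_{0,n}(L) := −(1/2)(L²−1)(P_n Q_n)'(L) tends to 1/2 as L → 1⁺. -/

import Mathlib

open Filter

/-- The Legendre polynomial `P_n`, via the Rodrigues formula. -/
noncomputable def legendreP (n : ℕ) (z : ℝ) : ℝ :=
  (1 / (2 ^ n * (n.factorial : ℝ))) * iteratedDeriv n (fun w : ℝ => (w ^ 2 - 1) ^ n) z

/-- The Legendre function of the second kind `Q_n` (for `z > 1`). -/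
noncomputable def legendreQ (n : ℕ) (z : ℝ) : ℝ :=
  (1 / 2) * legendreP n z * Real.log ((z + 1) / (z - 1)) -
    ∑ m ∈ Finset.Icc 1 n, (1 / (m : ℝ)) * legendreP (m - 1) z * legendreP (n - m) z

open Polynomial

private lemma iteratedDeriv_poly (p : ℝ[X]) (k : ℕ) :
    iteratedDeriv k (fun x : ℝ => p.eval x) = fun x => (derivative^[k] p).eval x := by
  induction k generalizing p with
  | zero => simp
  | succ k ih =>
    rw [iteratedDeriv_succ', Function.iterate_succ_apply]
    have h : (deriv fun x : ℝ => eval x p) = fun x => eval x (derivative p) :=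
      funext fun x => (p.hasDerivAt x).deriv
    rw [h, ih p.derivative]

noncomputable def pleg (n : ℕ) : ℝ[X] :=
  C (1 / (2 ^ n * (n.factorial : ℝ))) * derivative^[n] ((X ^ 2 - 1) ^ n)

private lemma legendreP_eq (n : ℕ) (z : ℝ) : legendreP n z = (pleg n).eval z := by
  unfold legendreP pleg
  have h : (fun w : ℝ => (w ^ 2 - 1) ^ n) = fun w : ℝ => (((X : ℝ[X]) ^ 2 - 1) ^ n).eval w := by
    funext w; simp
  rw [h, iteratedDeriv_poly]
  simp

private lemma pleg_eval_one (n : ℕ) : (pleg n).eval 1 = 1 := by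
  have hfac : ((X : ℝ[X]) ^ 2 - 1) ^ n = (X - C 1) ^ n * (X + C 1) ^ n := by
    rw [← mul_pow]; ring_nf; rw [Polynomial.C_1]; ring
  have hsum : (derivative^[n] ((X ^ 2 - 1) ^ n) : ℝ[X]).eval 1 = 2 ^ n * n.factorial := by
    rw [hfac, iterate_derivative_mul]
    rw [eval_finset_sum]
    rw [Finset.sum_eq_single 0]
    · rw [Nat.choose_zero_right, one_smul, Nat.sub_zero, Function.iterate_zero_apply,
        iterate_derivative_X_sub_pow_self]
      simp
      ring
    · intro k hk hk0
      have hkle : k ≤ n := Nat.lt_succ_iff.mp (Finset.mem_range.mp hk)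
      rw [iterate_derivative_X_sub_pow]
      have hnk : n - (n - k) = k := by omega
      rw [hnk]
      simp [hk0]
    · intro h; exact absurd (Finset.mem_range.mpr (Nat.succ_pos n)) h
  unfold pleg
  rw [eval_mul, hsum, eval_C]
  have h2 : (2 : ℝ) ^ n * n.factorial ≠ 0 := by positivity
  field_simp

noncomputable def plegS (n : ℕ) : ℝ[X] :=
  ∑ m ∈ Finset.Icc 1 n, C (1 / (m : ℝ)) * pleg (m - 1) * pleg (n - m)

private lemma legendreQ_eq (n : ℕ) (z : ℝ) :
    legendreQ n z = (1 / 2) * (pleg n).eval z * Real.log ((z + 1) / (z - 1)) -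
      (plegS n).eval z := by
  simp [legendreQ, legendreP_eq, plegS, eval_finset_sum]

private lemma hasDerivAt_PQ (n : ℕ) {L : ℝ} (hL : 1 < L) :
    HasDerivAt (fun z => legendreP n z * legendreQ n z)
      ((1 / 2 * ((pleg n ^ 2).derivative.eval L)) * (Real.log (L + 1) - Real.log (L - 1))
        + (1 / 2 * ((pleg n ^ 2).eval L)) * (1 / (L + 1) - 1 / (L - 1))
        - ((pleg n * plegS n).derivative.eval L)) L := by
  have h1 : L + 1 ≠ 0 := by linarith
  have h2 : L - 1 ≠ 0 := by linarith
  have hlog1 : HasDerivAt (fun z : ℝ => Real.log (z + 1)) (1 / (L + 1)) L := by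
    simpa using ((hasDerivAt_id L).add_const 1).log h1
  have hlog2 : HasDerivAt (fun z : ℝ => Real.log (z - 1)) (1 / (L - 1)) L := by
    simpa using ((hasDerivAt_id L).sub_const 1).log h2
  have hp2 : HasDerivAt (fun z : ℝ => (pleg n ^ 2).eval z) ((pleg n ^ 2).derivative.eval L) L :=
    (pleg n ^ 2).hasDerivAt L
  have hA := (hp2.const_mul (1 / 2 : ℝ)).mul (hlog1.sub hlog2)
  have hB := (pleg n * plegS n).hasDerivAt L
  have hG := hA.sub hB
  refine hG.congr_of_eventuallyEq ?_
  filter_upwards [Ioi_mem_nhds hL] with z hz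
  have hz1 : z + 1 ≠ 0 := by simp only [Set.mem_Ioi] at hz; linarith
  have hz2 : z - 1 ≠ 0 := by simp only [Set.mem_Ioi] at hz; linarith
  rw [legendreP_eq, legendreQ_eq, Real.log_div hz1 hz2]
  simp only [eval_mul, eval_pow, Pi.mul_apply, Pi.sub_apply]
  ring

/-- as `L → 1⁺`, `(P_n Q_n)'(L) = 1/(2(1-L)) + O(|log(L-1)|)`, and consequently
`λ_{0,n}(L) = -(1/2)(L²-1)(P_n Q_n)'(L) → 1/2`. -/
theorem legendre_derivative_asymptotics (n : ℕ) (hn : 1 ≤ n) :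
    (∃ C : ℝ, 0 < C ∧ ∃ δ : ℝ, 0 < δ ∧ ∀ L : ℝ, 1 < L → L < 1 + δ →
        |deriv (fun z => legendreP n z * legendreQ n z) L - 1 / (2 * (1 - L))| ≤
          C * |Real.log (L - 1)|) ∧
      Tendsto
        (fun L : ℝ => -(1 / 2) * (L ^ 2 - 1) * deriv (fun z => legendreP n z * legendreQ n z) L)
        (nhdsWithin 1 (Set.Ioi 1)) (nhds (1 / 2)) := by
  -- the factor polynomial h with p² - 1 = (X - 1) h
  obtain ⟨hpol, hhpol⟩ : (X - C 1 : ℝ[X]) ∣ (pleg n ^ 2 - 1) := by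
    apply dvd_iff_isRoot.mpr
    simp [IsRoot, pleg_eval_one]
  have hp2L : ∀ L : ℝ, (pleg n).eval L ^ 2 = 1 + (L - 1) * hpol.eval L := by
    intro L
    have := congrArg (eval L) hhpol
    simp only [eval_sub, eval_mul, eval_pow, eval_one, eval_X, eval_C] at this
    linarith
  constructor
  · -- Part 1
    set cf : ℝ → ℝ := fun L =>
      (derivative (pleg n)).eval L * (pleg n).eval L * Real.log (L + 1)
        + 1 / (2 * (L + 1)) - hpol.eval L / (L + 1)
        - (derivative (pleg n * plegS n)).eval L with hcf
    have hcfc : ContinuousOn cf (Set.Icc (1 : ℝ) 2) := by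
      apply ContinuousOn.sub
      apply ContinuousOn.sub
      apply ContinuousOn.add
      · exact (((derivative (pleg n)).continuous.mul
          ((pleg n).continuous)).continuousOn).mul
          (Real.continuousOn_log.comp (by fun_prop)
            (fun x hx => by simp only [Set.mem_Icc] at hx; simp; intro h; linarith [hx.1]))
      · apply ContinuousOn.div continuousOn_const (by fun_prop)
        intro x hx; simp only [Set.mem_Icc] at hx; intro h; nlinarith [hx.1]
      · apply ContinuousOn.div (hpol.continuous.continuousOn) (by fun_prop)
        intro x hx; simp only [Set.mem_Icc] at hx; intro h; linarith [hx.1]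
      · exact (derivative (pleg n * plegS n)).continuous.continuousOn
    obtain ⟨C1, hC1⟩ := (isCompact_Icc (a := (1:ℝ)) (b := 2)).exists_bound_of_continuousOn hcfc
    obtain ⟨C2, hC2⟩ := (isCompact_Icc (a := (1:ℝ)) (b := 2)).exists_bound_of_continuousOn
      (((derivative (pleg n)).continuous.mul ((pleg n).continuous)).continuousOn)
    refine ⟨|C1| + |C2| + 1, by positivity, Real.exp (-1), Real.exp_pos _, ?_⟩
    intro L hL hLδ
    have hexp1 : Real.exp (-1 : ℝ) < 1 := Real.exp_lt_one_iff.mpr (by norm_num)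
    have hLmem : L ∈ Set.Icc (1 : ℝ) 2 := ⟨hL.le, by linarith⟩
    have h1 : L + 1 ≠ 0 := by linarith
    have h2 : L - 1 ≠ 0 := by linarith
    have hDeq := (hasDerivAt_PQ n hL).deriv
    rw [hDeq]
    have hd2 : derivative (pleg n ^ 2) = C 2 * pleg n * derivative (pleg n) := derivative_sq _
    have key : 1 / 2 * ((pleg n ^ 2).derivative.eval L) * (Real.log (L + 1) - Real.log (L - 1))
        + 1 / 2 * ((pleg n ^ 2).eval L) * (1 / (L + 1) - 1 / (L - 1))
        - ((pleg n * plegS n).derivative.eval L) - 1 / (2 * (1 - L))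
        = cf L - ((derivative (pleg n)).eval L * (pleg n).eval L) * Real.log (L - 1) := by
      rw [hd2]
      simp only [eval_mul, eval_pow, eval_C, hcf]
      rw [hp2L L]
      have h3 : (1 : ℝ) - L ≠ 0 := by linarith
      field_simp
      ring
    rw [key]
    have hlog_ge : 1 ≤ |Real.log (L - 1)| := by
      have hlt : Real.log (L - 1) < -1 := by
        have : L - 1 < Real.exp (-1) := by linarith
        calc Real.log (L - 1) < Real.log (Real.exp (-1)) :=
              Real.log_lt_log (by linarith) this
          _ = -1 := Real.log_exp _
      rw [abs_of_neg (by linarith)]; linarith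
    have hb1 : |cf L| ≤ |C1| := le_trans (hC1 L hLmem) (le_abs_self C1)
    have hb2 : |(derivative (pleg n)).eval L * (pleg n).eval L| ≤ |C2| :=
      le_trans (hC2 L hLmem) (le_abs_self C2)
    calc |cf L - ((derivative (pleg n)).eval L * (pleg n).eval L) * Real.log (L - 1)|
        ≤ |cf L| + |(derivative (pleg n)).eval L * (pleg n).eval L| * |Real.log (L - 1)| := by
          rw [← abs_mul]; exact abs_sub _ _
      _ ≤ |C1| * |Real.log (L - 1)| + |C2| * |Real.log (L - 1)| := by
          have : |cf L| ≤ |C1| * |Real.log (L - 1)| := by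
            calc |cf L| ≤ |C1| := hb1
              _ = |C1| * 1 := (mul_one _).symm
              _ ≤ |C1| * |Real.log (L - 1)| := by
                  apply mul_le_mul_of_nonneg_left hlog_ge (abs_nonneg _)
          have h2' : |(derivative (pleg n)).eval L * (pleg n).eval L| * |Real.log (L - 1)|
              ≤ |C2| * |Real.log (L - 1)| :=
            mul_le_mul_of_nonneg_right hb2 (abs_nonneg _)
          linarith
      _ ≤ (|C1| + |C2| + 1) * |Real.log (L - 1)| := by nlinarith [abs_nonneg (Real.log (L-1))]
  · -- Part 2
    have hu : Tendsto (fun L : ℝ => (L - 1) * Real.log (L - 1)) (nhdsWithin 1 (Set.Ioi 1))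
        (nhds 0) := by
      have h0 : Tendsto (fun L : ℝ => L - 1) (nhdsWithin 1 (Set.Ioi 1)) (nhds 0) := by
        have hc : Continuous (fun L : ℝ => L - 1) := by fun_prop
        have := (hc.tendsto (1 : ℝ)).mono_left (nhdsWithin_le_nhds (s := Set.Ioi (1:ℝ)))
        simpa using this
      have h1 : Tendsto (fun x : ℝ => x * Real.log x) (nhds 0) (nhds 0) := by
        have := (Real.continuous_mul_log.continuousAt (x := (0:ℝ))).tendsto
        simpa using this
      exact h1.comp h0
    -- continuous part
    have hg : Tendsto (fun L : ℝ =>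
        -(1/2) * (L^2 - 1) * ((pleg n).eval L * (derivative (pleg n)).eval L) * Real.log (L + 1)
          + (1/2) * ((pleg n).eval L)^2
          + (1/2) * (L^2 - 1) * ((pleg n * plegS n).derivative.eval L))
        (nhdsWithin 1 (Set.Ioi 1)) (nhds (1/2)) := by
      have hca : ContinuousAt (fun L : ℝ =>
          -(1/2) * (L^2 - 1) * ((pleg n).eval L * (derivative (pleg n)).eval L) * Real.log (L + 1)
            + (1/2) * ((pleg n).eval L)^2
            + (1/2) * (L^2 - 1) * ((pleg n * plegS n).derivative.eval L)) 1 := by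
        apply ContinuousAt.add
        apply ContinuousAt.add
        · exact (ContinuousAt.mul (by fun_prop)
            (ContinuousAt.log (by fun_prop) (by norm_num)))
        · fun_prop
        · fun_prop
      have := hca.tendsto.mono_left (nhdsWithin_le_nhds (s := Set.Ioi (1:ℝ)))
      convert this using 2
      rw [pleg_eval_one]
      norm_num
    have hb : Tendsto (fun L : ℝ =>
        (1/2) * (L + 1) * ((pleg n).eval L * (derivative (pleg n)).eval L))
        (nhdsWithin 1 (Set.Ioi 1))
        (nhds ((1/2) * (1 + 1) * ((pleg n).eval 1 * (derivative (pleg n)).eval 1))) := by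
      exact (ContinuousAt.tendsto (by fun_prop)).mono_left
        (nhdsWithin_le_nhds (s := Set.Ioi (1:ℝ)))
    have hF : Tendsto (fun L : ℝ =>
        (-(1/2) * (L^2 - 1) * ((pleg n).eval L * (derivative (pleg n)).eval L) * Real.log (L + 1)
          + (1/2) * ((pleg n).eval L)^2
          + (1/2) * (L^2 - 1) * ((pleg n * plegS n).derivative.eval L))
          + ((1/2) * (L + 1) * ((pleg n).eval L * (derivative (pleg n)).eval L))
            * ((L - 1) * Real.log (L - 1)))
        (nhdsWithin 1 (Set.Ioi 1)) (nhds (1/2)) := by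
      have := hg.add (hb.mul hu)
      simpa using this
    refine Tendsto.congr' ?_ hF
    filter_upwards [self_mem_nhdsWithin] with L hL
    have hL1 : (1 : ℝ) < L := hL
    have h1 : L + 1 ≠ 0 := by linarith
    have h2 : L - 1 ≠ 0 := by linarith
    rw [(hasDerivAt_PQ n hL1).deriv]
    have hd2 : derivative (pleg n ^ 2) = C 2 * pleg n * derivative (pleg n) := derivative_sq _
    rw [hd2]
    simp only [eval_mul, eval_pow, eval_C]
    field_simp
    ring
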